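/- arXiv:2010.13781 — 2 statements merged into one kernel-verified Lean document; each statement's English description precedes it below -/
import Mathlib

section
/- Let S be a nonempty finite set of prime numbers and let k ≥ 1 be a natural number. Define the degree of a natural number d ≥ 1 to be the maximum exponent appearing in its prime factorization (degree 0 for d = 1). Let D_k be the (finite) set of natural numbers d all of whose prime factors lie in S and whose degree equals k; equivalently, D_k is the set of divisors d of (∏_{p ∈ S} p)^k whose maximal prime-power exponent is exactly k. Then ∑_{d ∈ D_k} λ(d) = (-1)^k. -/
open ArithmeticFunction Finset

/-- The Liouville function `λ(n) = (-1)^Ω(n)`, where `Ω(n)` is the number of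
prime factors of `n` counted with multiplicity. -/
def liouville (n : ℕ) : ℤ := (-1) ^ (ArithmeticFunction.cardFactors n)

/-- The "degree" of a natural number: the maximum exponent appearing in its
prime factorization (with degree 0 for `d = 1`). -/
def degree (d : ℕ) : ℕ := d.factorization.support.sup d.factorization

/-- Liouville as an arithmetic function. -/
def lf : ArithmeticFunction ℤ := ⟨fun n => if n = 0 then 0 else _root_.liouville n, by simp⟩

lemma lf_apply {n : ℕ} (hn : n ≠ 0) : lf n = _root_.liouville n := by simp [lf, hn]

lemma lf_isMult : lf.IsMultiplicative := by
  constructor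
  · simp [lf, _root_.liouville]
  · intro m n h
    rcases eq_or_ne m 0 with rfl | hm
    · simp [lf]
    rcases eq_or_ne n 0 with rfl | hn
    · simp [lf]
    simp [lf, hm, hn, mul_ne_zero hm hn, _root_.liouville, cardFactors_mul hm hn, pow_add]

open scoped ArithmeticFunction.zeta in
lemma g_eval (S : Finset ℕ) (hS : S.Nonempty) (hprime : ∀ p ∈ S, p.Prime) (m : ℕ) :
    ∑ d ∈ ((∏ p ∈ S, p) ^ m).divisors, _root_.liouville d
      = if Even (m + 1) then 0 else 1 := by
  have h1 : ∑ d ∈ ((∏ p ∈ S, p) ^ m).divisors, _root_.liouville d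
      = ((ζ : ArithmeticFunction ℤ) * lf) ((∏ p ∈ S, p) ^ m) := by
    rw [coe_zeta_mul_apply]
    exact Finset.sum_congr rfl fun d hd =>
      (lf_apply (Nat.pos_of_mem_divisors hd).ne').symm
  rw [h1, ← Finset.prod_pow]
  have hmult : ((ζ : ArithmeticFunction ℤ) * lf).IsMultiplicative :=
    (isMultiplicative_zeta.natCast).mul lf_isMult
  rw [ArithmeticFunction.IsMultiplicative.map_prod _ hmult S ?_]
  · have : ∀ p ∈ S, ((ζ : ArithmeticFunction ℤ) * lf) (p ^ m)
        = if Even (m + 1) then 0 else 1 := by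
      intro p hp
      have hpp := hprime p hp
      rw [coe_zeta_mul_apply, Nat.sum_divisors_prime_pow hpp]
      have : ∀ j ∈ Finset.range (m + 1), lf (p ^ j) = (-1) ^ j := by
        intro j hj
        rw [lf_apply (pow_ne_zero _ hpp.pos.ne'), _root_.liouville,
          cardFactors_apply_prime_pow hpp]
      rw [Finset.sum_congr rfl this, neg_one_geom_sum]
    rw [Finset.prod_congr rfl this]
    by_cases h : Even (m + 1)
    · simp [h, Finset.prod_const, zero_pow (Finset.card_ne_zero.mpr hS)]
    · simp [h]
  · intro p hp q hq hpq
    exact Nat.Coprime.pow _ _ ((Nat.coprime_primes (hprime p hp) (hprime q hq)).mpr hpq)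

theorem liouville_sum_over_degree_k_numbers
    (S : Finset ℕ) (hS : S.Nonempty) (hprime : ∀ p ∈ S, p.Prime)
    (k : ℕ) (hk : 1 ≤ k) :
    ∑ d ∈ ((∏ p ∈ S, p) ^ k).divisors.filter (fun d => degree d = k),
      _root_.liouville d = (-1) ^ k := by
  set P := ∏ p ∈ S, p with hP
  have hP0 : P ≠ 0 := Finset.prod_ne_zero_iff.mpr fun p hp => (hprime p hp).pos.ne'
  -- factorization of P
  have hPfact : ∀ q : ℕ, P.factorization q = if q ∈ S then 1 else 0 := by
    intro q
    rw [hP, Nat.factorization_prod (fun p hp => (hprime p hp).pos.ne')]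
    rw [Finset.sum_apply']
    rw [Finset.sum_congr rfl (fun p hp => by
      rw [(hprime p hp).factorization, Finsupp.single_apply])]
    simp
  -- dvd iff degree bound
  have key : ∀ d : ℕ, d ≠ 0 → d ∣ P ^ k → ∀ m : ℕ, (d ∣ P ^ m ↔ degree d ≤ m) := by
    intro d hd hdk m
    have hsupp : ∀ q ∈ d.factorization.support, q ∈ S := by
      intro q hq
      by_contra hqS
      have hle := (Nat.factorization_le_iff_dvd hd (pow_ne_zero k hP0)).mpr hdk q
      rw [Nat.factorization_pow, Finsupp.smul_apply, hPfact, if_neg hqS] at hle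
      simp only [smul_eq_mul, mul_zero, Nat.le_zero] at hle
      exact (Finsupp.mem_support_iff.mp hq) hle
    constructor
    · intro hdm
      have hle := (Nat.factorization_le_iff_dvd hd (pow_ne_zero m hP0)).mpr hdm
      apply Finset.sup_le
      intro q hq
      have := hle q
      rw [Nat.factorization_pow, Finsupp.smul_apply, hPfact, if_pos (hsupp q hq)] at this
      simpa using this
    · intro hdeg
      rw [← Nat.factorization_le_iff_dvd hd (pow_ne_zero m hP0)]
      intro q
      rw [Nat.factorization_pow, Finsupp.smul_apply, hPfact]
      by_cases hq : q ∈ d.factorization.support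
      · rw [if_pos (hsupp q hq)]
        simpa using le_trans (Finset.le_sup hq) hdeg
      · simp [Finsupp.notMem_support_iff.mp hq]
  -- set equality
  have hset : ((P ^ k).divisors.filter (fun d => degree d = k))
      = (P ^ k).divisors \ (P ^ (k - 1)).divisors := by
    ext d
    simp only [Finset.mem_filter, Finset.mem_sdiff, Nat.mem_divisors]
    constructor
    · rintro ⟨⟨hdvd, hk0⟩, hdeg⟩
      have hd0 : d ≠ 0 := ne_zero_of_dvd_ne_zero hk0 hdvd
      refine ⟨⟨hdvd, hk0⟩, fun h => ?_⟩
      have := (key d hd0 hdvd (k - 1)).mp h.1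
      omega
    · rintro ⟨⟨hdvd, hk0⟩, hnd⟩
      have hd0 : d ≠ 0 := ne_zero_of_dvd_ne_zero hk0 hdvd
      have h1 : degree d ≤ k := (key d hd0 hdvd k).mp hdvd
      have h2 : ¬ degree d ≤ k - 1 := fun h =>
        hnd ⟨(key d hd0 hdvd (k - 1)).mpr h, pow_ne_zero _ hP0⟩
      exact ⟨⟨hdvd, hk0⟩, by omega⟩
  rw [hset, Finset.sum_sdiff_eq_sub
    (Nat.divisors_subset_of_dvd (pow_ne_zero k hP0) (pow_dvd_pow P (by omega)))]
  rw [g_eval S hS hprime, g_eval S hS hprime]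
  rcases Nat.even_or_odd k with he | ho
  · have h1 : ¬ Even (k + 1) := by simp [Nat.even_add_one, he]
    have h2 : Even (k - 1 + 1) := by
      have : k - 1 + 1 = k := by omega
      rw [this]; exact he
    rw [if_neg h1, if_pos h2, he.neg_one_pow]; ring
  · have h1 : Even (k + 1) := by simp [Nat.even_add_one, Nat.not_even_iff_odd.mpr ho]
    have h2 : ¬ Even (k - 1 + 1) := by
      have : k - 1 + 1 = k := by omega
      rw [this]; exact Nat.not_even_iff_odd.mpr ho
    rw [if_pos h1, if_neg h2, ho.neg_one_pow]; ring
end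

section
/- (Legendre's formula with the Spencer-Brown rectification.) Let n ≥ 2 be a natural number and let P = ∏_{p prime, p² ≤ n} p be the product of all primes p ≤ √n. Then, as an identity of integers, π(n) = π(⌊√n⌋) + (n-1) + ∑_{d ∣ P, d ≥ 2} μ(d)·⌊n/d⌋, where the sum is over the divisors d of P with d ≥ 2. -/
open ArithmeticFunction Finset

theorem legendre_formula_spencerBrown_rectified (n : ℕ) (hn : 2 ≤ n) :
    (Nat.primeCounting n : ℤ) =
      (Nat.primeCounting (Nat.sqrt n) : ℤ) + ((n : ℤ) - 1) +
        ∑ d ∈ (∏ p ∈ (Finset.range (n + 1)).filter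
              (fun p => p.Prime ∧ p ^ 2 ≤ n), p).divisors.filter (fun d => 2 ≤ d),
          (ArithmeticFunction.moebius d : ℤ) * (n / d : ℕ) := by
  set S : Finset ℕ := (Finset.range (n + 1)).filter (fun p => p.Prime ∧ p ^ 2 ≤ n) with hS
  set P : ℕ := ∏ p ∈ S, p with hP
  have hS_primes : ∀ p ∈ S, p.Prime := fun p hp => (mem_filter.mp hp).2.1
  have hP0 : P ≠ 0 := Finset.prod_ne_zero_iff.mpr fun p hp => (hS_primes p hp).ne_zero
  -- membership of a prime in S dividing characterization
  have hdvdP : ∀ p : ℕ, p.Prime → p ^ 2 ≤ n → p ∣ P := by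
    intro p pp hp2
    apply Finset.dvd_prod_of_mem
    rw [hS, mem_filter, mem_range]
    exact ⟨lt_of_le_of_lt (le_trans (Nat.le_of_lt (lt_of_lt_of_le (by nlinarith [pp.two_le] : p < p ^ 2) hp2)) (le_refl n)) (Nat.lt_succ_self n), pp, hp2⟩
  have hPdvd : ∀ p : ℕ, p.Prime → p ∣ P → p ^ 2 ≤ n := by
    intro p pp hpP
    obtain ⟨q, hq, hpq⟩ := pp.prime.exists_mem_finset_dvd hpP
    have : p = q := (((hS_primes q hq).dvd_iff_eq pp.ne_one).mp hpq).symm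
    subst this
    exact (mem_filter.mp hq).2.2
  -- the coprime-counting set
  set T : Finset ℕ := (Finset.Ioc 0 n).filter (fun m => m.Prime ∧ n < m ^ 2) with hT
  have key_set : (Finset.Ioc 0 n).filter (fun m => Nat.gcd P m = 1) = insert 1 T := by
    ext m
    simp only [hT, mem_insert, mem_filter, mem_Ioc]
    constructor
    · rintro ⟨⟨hm0, hmn⟩, hg⟩
      rcases eq_or_ne m 1 with rfl | hm1
      · exact Or.inl rfl
      right
      have hm2 : 2 ≤ m := by omega
      have pf := Nat.minFac_prime hm1
      have hdm : m.minFac ∣ m := Nat.minFac_dvd m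
      have hng : ¬ m.minFac ^ 2 ≤ n := by
        intro h
        have h1 : m.minFac ∣ P := hdvdP _ pf h
        have : m.minFac ∣ Nat.gcd P m := Nat.dvd_gcd h1 hdm
        rw [hg] at this
        exact pf.ne_one (Nat.eq_one_of_dvd_one this)
      push_neg at hng
      have hmp : m.Prime := by
        by_contra hnotp
        have := Nat.minFac_sq_le_self hm0 hnotp
        omega
      refine ⟨⟨hm0, hmn⟩, hmp, ?_⟩
      have : m.minFac ≤ m := Nat.minFac_le hm0
      calc n < m.minFac ^ 2 := hng
        _ ≤ m ^ 2 := Nat.pow_le_pow_left this 2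
    · rintro (rfl | ⟨⟨hm0, hmn⟩, hmp, hm2⟩)
      · exact ⟨⟨one_pos, le_trans one_le_two hn⟩, Nat.gcd_one_right P⟩
      refine ⟨⟨hm0, hmn⟩, ?_⟩
      have hnd : ¬ m ∣ P := fun h => absurd (hPdvd m hmp h) (by omega)
      have : Nat.Coprime m P := (Nat.Prime.coprime_iff_not_dvd hmp).mpr hnd
      exact Nat.Coprime.gcd_eq_one this.symm
  have h1T : (1 : ℕ) ∉ T := by
    simp [hT, Nat.not_prime_one]
  -- Möbius sum over divisors equals coprime count
  have moebius_sum : ∀ k : ℕ, ∑ d ∈ k.divisors, (moebius d : ℤ) = if k = 1 then 1 else 0 := by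
    intro k
    have := congrFun (congrArg (DFunLike.coe) ArithmeticFunction.moebius_mul_coe_zeta) k
    rw [ArithmeticFunction.coe_mul_zeta_apply, ArithmeticFunction.one_apply] at this
    exact this
  have filter_eq : ∀ m : ℕ, P.divisors.filter (· ∣ m) = (Nat.gcd P m).divisors := by
    intro m
    ext d
    simp only [mem_filter, Nat.mem_divisors, Nat.dvd_gcd_iff]
    constructor
    · rintro ⟨⟨h1, _⟩, h2⟩
      exact ⟨⟨h1, h2⟩, Nat.gcd_ne_zero_left hP0⟩
    · rintro ⟨⟨h1, h2⟩, _⟩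
      exact ⟨⟨h1, hP0⟩, h2⟩
  have full_sum : ∑ d ∈ P.divisors, (moebius d : ℤ) * (n / d : ℕ) =
      (((Finset.Ioc 0 n).filter (fun m => Nat.gcd P m = 1)).card : ℤ) := by
    calc ∑ d ∈ P.divisors, (moebius d : ℤ) * (n / d : ℕ)
        = ∑ d ∈ P.divisors, (moebius d : ℤ) * (((Finset.Ioc 0 n).filter (d ∣ ·)).card : ℤ) := by
          refine Finset.sum_congr rfl fun d _ => ?_
          rw [Nat.Ioc_filter_dvd_card_eq_div]
      _ = ∑ d ∈ P.divisors, ∑ m ∈ (Finset.Ioc 0 n).filter (d ∣ ·), (moebius d : ℤ) := by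
          refine Finset.sum_congr rfl fun d _ => ?_
          rw [Finset.sum_const, nsmul_eq_mul, mul_comm]
      _ = ∑ d ∈ P.divisors, ∑ m ∈ Finset.Ioc 0 n, if d ∣ m then (moebius d : ℤ) else 0 := by
          refine Finset.sum_congr rfl fun d _ => ?_
          rw [Finset.sum_filter]
      _ = ∑ m ∈ Finset.Ioc 0 n, ∑ d ∈ P.divisors, if d ∣ m then (moebius d : ℤ) else 0 :=
          Finset.sum_comm
      _ = ∑ m ∈ Finset.Ioc 0 n, ∑ d ∈ P.divisors.filter (· ∣ m), (moebius d : ℤ) := by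
          refine Finset.sum_congr rfl fun m _ => ?_
          rw [Finset.sum_filter]
      _ = ∑ m ∈ Finset.Ioc 0 n, if Nat.gcd P m = 1 then (1 : ℤ) else 0 := by
          refine Finset.sum_congr rfl fun m _ => ?_
          rw [filter_eq m, moebius_sum]
      _ = (((Finset.Ioc 0 n).filter (fun m => Nat.gcd P m = 1)).card : ℤ) := by
          rw [← Finset.sum_filter, Finset.sum_const, nsmul_eq_mul, mul_one]
  -- split off d = 1
  have h1div : (1 : ℕ) ∈ P.divisors := Nat.one_mem_divisors.mpr hP0
  have filter2 : P.divisors.filter (fun d => 2 ≤ d) = P.divisors.erase 1 := by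
    ext d
    simp only [mem_filter, mem_erase, Nat.mem_divisors]
    constructor
    · rintro ⟨h, h2⟩; exact ⟨by omega, h⟩
    · rintro ⟨h1, h⟩
      have : d ≠ 0 := fun h0 => hP0 (Nat.eq_zero_of_zero_dvd (h0 ▸ h.1))
      exact ⟨h, by omega⟩
  have split : ∑ d ∈ P.divisors, (moebius d : ℤ) * (n / d : ℕ) =
      (n : ℤ) + ∑ d ∈ P.divisors.filter (fun d => 2 ≤ d), (moebius d : ℤ) * (n / d : ℕ) := by
    rw [filter2, ← Finset.add_sum_erase _ _ h1div]
    simp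
  -- prime counting split
  have hcount : ∀ k : ℕ, Nat.primeCounting k = ((Finset.range (k + 1)).filter Nat.Prime).card := by
    intro k
    rw [Nat.primeCounting, Nat.primeCounting', Nat.count_eq_card_filter_range]
  have hSsqrt : S = (Finset.range (Nat.sqrt n + 1)).filter Nat.Prime := by
    ext p
    simp only [hS, mem_filter, mem_range, Nat.lt_succ_iff]
    constructor
    · rintro ⟨_, pp, h2⟩
      exact ⟨Nat.le_sqrt'.mpr h2, pp⟩
    · rintro ⟨hps, pp⟩
      have h2 : p ^ 2 ≤ n := Nat.le_sqrt'.mp hps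
      have : p ≤ n := le_trans (Nat.le_of_lt (by nlinarith [pp.two_le] : p < p ^ 2)) h2
      exact ⟨this, pp, h2⟩
  have hTeq : T = (Finset.range (n + 1)).filter (fun p => p.Prime ∧ ¬ p ^ 2 ≤ n) := by
    ext p
    simp only [hT, mem_filter, mem_Ioc, mem_range, Nat.lt_succ_iff, not_le]
    constructor
    · rintro ⟨⟨_, h⟩, hp⟩; exact ⟨h, hp⟩
    · rintro ⟨h, hp⟩; exact ⟨⟨hp.1.pos, h⟩, hp⟩
  have count_split : Nat.primeCounting n = Nat.primeCounting (Nat.sqrt n) + T.card := by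
    rw [hcount n, hcount (Nat.sqrt n), ← hSsqrt, hTeq]
    have := Finset.card_filter_add_card_filter_not
      (s := (Finset.range (n + 1)).filter Nat.Prime) (p := fun p => p ^ 2 ≤ n)
    rw [Finset.filter_filter, Finset.filter_filter] at this
    rw [← this, hS]
  -- assemble
  have hA : (((Finset.Ioc 0 n).filter (fun m => Nat.gcd P m = 1)).card : ℤ) = 1 + T.card := by
    rw [key_set, Finset.card_insert_of_notMem h1T]
    push_cast
    ring
  have hrest : ∑ d ∈ P.divisors.filter (fun d => 2 ≤ d), (moebius d : ℤ) * (n / d : ℕ)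
      = 1 + (T.card : ℤ) - n := by
    have := split.symm.trans (full_sum.trans hA)
    linarith
  rw [count_split, hrest]
  push_cast
  ring
end
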